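/- There exists a constant C > 0 such that for every integer k ≥ 3, every integer n ≥ 1, and every integer r ≥ 1, there is a sequence X : Fin N → (Fin r → ZMod n), where N = ⌊(k·n/4) · (max(1 + 1/(e·k) − C/n, 0))^r⌋, containing no zero-sum subsequence of length k·n. Equivalently, s_{kn}(C_n^r) > (kn/4)·(1 + 1/(ek) − O(1/n))^r. -/

import Mathlib

open Finset

lemma card_fin_lt_subtype (a b : ℕ) (hab : a ≤ b) :
    Fintype.card {x : Fin b // (x : ℕ) < a} = a := by
  have : Fintype.card {x : Fin b // (x : ℕ) < a} = Fintype.card (Fin a) :=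
    Fintype.card_congr ⟨fun x => ⟨x.1.1, x.2⟩,
      fun y => ⟨⟨y.1, lt_of_lt_of_le y.2 hab⟩, y.2⟩,
      fun x => by ext; rfl, fun y => by ext; rfl⟩
  simpa using this

lemma card_pointwise_constraint {K b : ℕ} (Q : Fin K → Fin b → Prop)
    [∀ j x, Decidable (Q j x)] :
    Fintype.card {v : Fin K → Fin b // ∀ j, Q j (v j)}
      = ∏ j : Fin K, Fintype.card {x : Fin b // Q j x} := by
  rw [Fintype.card_congr (Equiv.subtypePiEquivPi (p := Q)), Fintype.card_pi]

lemma card_part {K b a : ℕ} (hab : a ≤ b) (S T : Finset (Fin K)) (hTS : T ⊆ S) :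
    (univ.filter (fun v : Fin K → Fin b =>
        S.filter (fun j => ((v j : ℕ) < a)) = T)).card
      = a ^ T.card * (b - a) ^ (S.card - T.card) * b ^ (K - S.card) := by
  classical
  have hQ : ∀ v : Fin K → Fin b,
      (S.filter (fun j => ((v j : ℕ) < a)) = T) ↔
      (∀ j, if j ∈ T then ((v j : ℕ) < a)
            else if j ∈ S then ¬ ((v j : ℕ) < a) else True) := by
    intro v
    constructor
    · intro h j
      by_cases hjT : j ∈ T
      · simp only [hjT, if_true]
        rw [← h] at hjT
        exact (mem_filter.mp hjT).2
      · simp only [hjT, if_false]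
        by_cases hjS : j ∈ S
        · simp only [hjS, if_true]
          intro hsmall
          exact hjT (h ▸ mem_filter.mpr ⟨hjS, hsmall⟩)
        · simp [hjS]
    · intro h
      ext j
      simp only [mem_filter]
      constructor
      · rintro ⟨hjS, hsmall⟩
        by_contra hjT
        have := h j
        simp [hjT, hjS] at this
        exact absurd hsmall (not_lt.mpr this)
      · intro hjT
        have := h j
        simp only [hjT, if_true] at this
        exact ⟨hTS hjT, this⟩
  rw [filter_congr (fun v _ => by rw [hQ v])]
  rw [← Fintype.card_subtype]
  rw [card_pointwise_constraint (Q := fun j x => if j ∈ T then ((x : ℕ) < a)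
      else if j ∈ S then ¬ ((x : ℕ) < a) else True)]
  have : ∀ j : Fin K,
      Fintype.card {x : Fin b // if j ∈ T then ((x : ℕ) < a)
          else if j ∈ S then ¬ ((x : ℕ) < a) else True}
      = if j ∈ T then a else if j ∈ S then b - a else b := by
    intro j
    by_cases hjT : j ∈ T
    · simp only [hjT, if_true]
      exact card_fin_lt_subtype a b hab
    · by_cases hjS : j ∈ S
      · simp only [hjT, hjS, if_false, if_true]
        rw [Fintype.card_subtype_compl, card_fin_lt_subtype a b hab, Fintype.card_fin]
      · simp only [hjT, hjS, if_false]
        exact (Fintype.card_congr (Equiv.subtypeUnivEquiv (fun _ => trivial))).trans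
          (Fintype.card_fin b)
  rw [Finset.prod_congr rfl (fun j _ => this j)]
  rw [← Finset.prod_sdiff (subset_univ S), ← Finset.prod_sdiff hTS]
  have h1 : ∀ j ∈ univ \ S, (if j ∈ T then a else if j ∈ S then b - a else b) = b := by
    intro j hj
    rw [mem_sdiff] at hj
    have hT : j ∉ T := fun h => hj.2 (hTS h)
    simp [hT, hj.2]
  have h2 : ∀ j ∈ S \ T, (if j ∈ T then a else if j ∈ S then b - a else b) = b - a := by
    intro j hj
    rw [mem_sdiff] at hj
    simp [hj.1, hj.2]
  have h3 : ∀ j ∈ T, (if j ∈ T then a else if j ∈ S then b - a else b) = a := by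
    intro j hj; simp [hj]
  rw [Finset.prod_congr rfl h1, Finset.prod_congr rfl h2, Finset.prod_congr rfl h3]
  rw [prod_const, prod_const, prod_const, card_sdiff_of_subset (subset_univ S), card_sdiff_of_subset hTS,
    card_univ, Fintype.card_fin]
  ring

lemma col_count {K b a k n : ℕ} (hn : 1 ≤ n) (hab : a ≤ b)
    (S : Finset (Fin K)) (hS : S.card = k * n) :
    (univ.filter (fun v : Fin K → Fin b =>
        n ∣ (S.filter (fun j => ((v j : ℕ) < a))).card)).card
      ≤ (∑ t ∈ range (k+1), (k*n).choose (t*n) * a^(t*n) * (b-a)^(k*n - t*n))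
          * b ^ (K - k*n) := by
  classical
  have hsub : (univ.filter (fun v : Fin K → Fin b =>
        n ∣ (S.filter (fun j => ((v j : ℕ) < a))).card))
      ⊆ (range (k+1)).biUnion (fun t =>
          (S.powersetCard (t*n)).biUnion (fun T =>
            univ.filter (fun v : Fin K → Fin b =>
              S.filter (fun j => ((v j : ℕ) < a)) = T))) := by
    intro v hv
    rw [mem_filter] at hv
    obtain ⟨t, ht⟩ := hv.2
    have hle : (S.filter (fun j => ((v j : ℕ) < a))).card ≤ k * n := by
      rw [← hS]; exact card_le_card (filter_subset _ _)
    have htk : t ≤ k := by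
      by_contra h
      push_neg at h
      have : k * n < n * t := by
        calc k * n < (k+1) * n := by nlinarith
        _ ≤ t * n := Nat.mul_le_mul_right n h
        _ = n * t := Nat.mul_comm t n
      omega
    rw [mem_biUnion]
    refine ⟨t, mem_range.mpr (Nat.lt_succ_of_le htk), ?_⟩
    rw [mem_biUnion]
    refine ⟨S.filter (fun j => ((v j : ℕ) < a)), ?_, by simp⟩
    rw [mem_powersetCard]
    exact ⟨filter_subset _ _, by rw [ht, Nat.mul_comm]⟩
  calc _ ≤ ((range (k+1)).biUnion (fun t =>
          (S.powersetCard (t*n)).biUnion (fun T =>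
            univ.filter (fun v : Fin K → Fin b =>
              S.filter (fun j => ((v j : ℕ) < a)) = T)))).card :=
        card_le_card hsub
    _ ≤ ∑ t ∈ range (k+1), ((S.powersetCard (t*n)).biUnion (fun T =>
            univ.filter (fun v : Fin K → Fin b =>
              S.filter (fun j => ((v j : ℕ) < a)) = T))).card := card_biUnion_le
    _ ≤ ∑ t ∈ range (k+1), ∑ T ∈ S.powersetCard (t*n),
          (univ.filter (fun v : Fin K → Fin b =>
              S.filter (fun j => ((v j : ℕ) < a)) = T)).card :=
        Finset.sum_le_sum (fun t _ => card_biUnion_le)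
    _ ≤ _ := by
        rw [Finset.sum_mul]
        apply Finset.sum_le_sum
        intro t ht
        have : ∀ T ∈ S.powersetCard (t*n),
            (univ.filter (fun v : Fin K → Fin b =>
              S.filter (fun j => ((v j : ℕ) < a)) = T)).card
            = a^(t*n) * (b-a)^(k*n - t*n) * b^(K - k*n) := by
          intro T hT
          rw [mem_powersetCard] at hT
          rw [card_part hab S T hT.1, hT.2, hS]
        rw [Finset.sum_congr rfl this, sum_const, card_powersetCard, hS, smul_eq_mul]
        ring_nf
        exact le_refl _

lemma exists_good_seq (k n K r a b : ℕ) (hk : 1 ≤ k) (hn : 1 ≤ n) (hr : 1 ≤ r)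
    (hab : a ≤ b)
    (hKM : k * n ≤ K)
    (hcount : K.choose (k*n) *
      (∑ t ∈ Finset.range (k+1), (k*n).choose (t*n) * a^(t*n) * (b-a)^(k*n - t*n)) ^ r
      < b ^ (k*n*r)) :
    ∃ X : Fin K → Fin r → ZMod n,
      ∀ S : Finset (Fin K), S.card = k * n → ∑ j ∈ S, X j ≠ 0 := by
  classical
  haveI : NeZero n := ⟨by omega⟩
  set W := ∑ t ∈ Finset.range (k+1), (k*n).choose (t*n) * a^(t*n) * (b-a)^(k*n - t*n)
    with hW
  have hb : 1 ≤ b := by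
    by_contra hb
    push_neg at hb
    interval_cases b
    rw [Nat.zero_pow (by positivity)] at hcount
    exact absurd hcount (Nat.not_lt_zero _)
  have hcardΩ : Fintype.card (Fin r → Fin K → Fin b) = b ^ (K * r) := by
    rw [Fintype.card_fun, Fintype.card_fun, Fintype.card_fin, Fintype.card_fin,
      Fintype.card_fin, ← pow_mul]
  set X : (Fin r → Fin K → Fin b) → Fin K → Fin r → ZMod n :=
    fun σ j i => if ((σ i j : ℕ) < a) then 1 else 0 with hX
  -- badness for a fixed S
  have key : ∀ S : Finset (Fin K), S.card = k * n →
      (univ.filter (fun σ : Fin r → Fin K → Fin b => ∑ j ∈ S, X σ j = 0)).card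
        ≤ (W * b ^ (K - k*n)) ^ r := by
    intro S hS
    have hiff : ∀ σ : Fin r → Fin K → Fin b, (∑ j ∈ S, X σ j = 0) ↔
        ∀ i : Fin r, n ∣ (S.filter (fun j => ((σ i j : ℕ) < a))).card := by
      intro σ
      rw [funext_iff]
      apply forall_congr'
      intro i
      rw [Finset.sum_apply]
      have : ∀ j ∈ S, X σ j i = if ((σ i j : ℕ) < a) then (1 : ZMod n) else 0 :=
        fun j _ => rfl
      rw [Finset.sum_congr rfl this, Finset.sum_boole]
      rw [show ((0 : Fin r → ZMod n) i) = 0 from rfl]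
      rw [ZMod.natCast_eq_zero_iff]
    rw [filter_congr (fun σ _ => by rw [hiff σ])]
    rw [← Fintype.card_subtype]
    rw [Fintype.card_congr (Equiv.subtypePiEquivPi
      (p := fun (i : Fin r) (v : Fin K → Fin b) =>
        n ∣ (S.filter (fun j => ((v j : ℕ) < a))).card))]
    rw [Fintype.card_pi]
    rw [Finset.prod_const]
    rw [card_univ, Fintype.card_fin]
    apply Nat.pow_le_pow_left
    rw [Fintype.card_subtype]
    exact col_count hn hab S hS
  set badS : Finset (Fin r → Fin K → Fin b) :=
    univ.filter (fun σ => ∃ S ∈ univ.powersetCard (k*n), ∑ j ∈ S, X σ j = 0) with hbadS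
  -- union bound
  have hbad : badS.card < Fintype.card (Fin r → Fin K → Fin b) := by
    have hsub : badS ⊆ (univ.powersetCard (k*n)).biUnion
          (fun S => univ.filter (fun σ => ∑ j ∈ S, X σ j = 0)) := by
      intro σ hσ
      rw [hbadS] at hσ
      simp only [mem_filter] at hσ
      obtain ⟨S, hS1, hS2⟩ := hσ.2
      rw [mem_biUnion]
      exact ⟨S, hS1, mem_filter.mpr ⟨mem_univ _, hS2⟩⟩
    calc _ ≤ ((univ.powersetCard (k*n)).biUnion
          (fun S => univ.filter (fun σ => ∑ j ∈ S, X σ j = 0))).card :=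
          card_le_card hsub
      _ ≤ ∑ S ∈ univ.powersetCard (k*n),
            (univ.filter (fun σ => ∑ j ∈ S, X σ j = 0)).card := card_biUnion_le
      _ ≤ ∑ S ∈ univ.powersetCard (k*n), (W * b ^ (K - k*n)) ^ r := by
          apply Finset.sum_le_sum
          intro S hS
          rw [mem_powersetCard_univ] at hS
          exact key S hS
      _ = K.choose (k*n) * (W * b ^ (K - k*n)) ^ r := by
          rw [sum_const, card_powersetCard, card_univ, Fintype.card_fin, smul_eq_mul]
      _ = K.choose (k*n) * W ^ r * (b ^ ((K - k*n) * r)) := by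
          rw [mul_pow, pow_mul]; ring
      _ < b ^ (k*n*r) * b ^ ((K - k*n)*r) := by
          exact (Nat.mul_lt_mul_right (Nat.pow_pos (by omega))).mpr hcount
      _ = b ^ (K * r) := by
          rw [← pow_add, ← Nat.add_mul]
          congr 2
          omega
      _ = Fintype.card (Fin r → Fin K → Fin b) := hcardΩ.symm
  -- extract a good seed
  have hex : ∃ σ, σ ∉ badS := by
    by_contra h
    push_neg at h
    have : badS = univ := Finset.eq_univ_of_forall h
    rw [this, card_univ] at hbad
    exact lt_irrefl _ hbad
  obtain ⟨σ, hσ⟩ := hex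
  rw [hbadS] at hσ
  simp only [mem_filter] at hσ
  push_neg at hσ
  refine ⟨X σ, fun S hS h0 => ?_⟩
  exact hσ (mem_univ _) S (mem_powersetCard_univ.mpr hS) h0

lemma scalar_ineq (k e : ℝ) (hk : 3 ≤ k) (he1 : 2.7182 ≤ e) (he2 : e ≤ 2.7183) :
    e/(100*k) + 1/(e*k) + 1/(3*(k-1)^2) ≤ 1/(2*(k-1)) := by
  have hk0 : 0 < k := by linarith
  have hk1 : 0 < k - 1 := by linarith
  have he0 : 0 < e := by linarith
  have h1 : e/(100*k) ≤ 2.7183/(100*k) := by gcongr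
  have h2 : 1/(e*k) ≤ 1/(2.7182*k) := by gcongr
  have h3 : 2.7183/(100*k) + 1/(2.7182*k) + 1/(3*(k-1)^2) ≤ 1/(2*(k-1)) := by
    rw [div_add_div _ _ (by positivity) (by positivity),
      div_add_div _ _ (by positivity) (by positivity),
      div_le_div_iff₀ (by positivity) (by positivity)]
    ring_nf
    nlinarith [sq_nonneg (k-3), mul_nonneg (sub_nonneg.mpr hk) hk0.le,
      mul_nonneg (mul_nonneg (sub_nonneg.mpr hk) hk0.le) hk0.le]
  linarith

lemma cubic_taylor' (x : ℝ) (h0 : 0 ≤ x) :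
    1 + x ≤ Real.exp (x - x^2/2 + x^3/3) := by
  have hy0 : 0 ≤ x - x^2/2 + x^3/3 := by nlinarith [sq_nonneg (x - 3/4)]
  have h4 := Real.sum_le_exp_of_nonneg hy0 4
  have hsum : ∑ i ∈ range 4, (x - x^2/2 + x^3/3)^i / i.factorial
      = 1 + (x - x^2/2 + x^3/3) + (x - x^2/2 + x^3/3)^2/2 + (x - x^2/2 + x^3/3)^3/6 := by
    rw [Finset.sum_range_succ, Finset.sum_range_succ, Finset.sum_range_succ,
      Finset.sum_range_one]
    norm_num [Nat.factorial]
  rw [hsum] at h4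
  have : 1 + x ≤ 1 + (x - x^2/2 + x^3/3) + (x - x^2/2 + x^3/3)^2/2
      + (x - x^2/2 + x^3/3)^3/6 := by
    nlinarith [sq_nonneg x, sq_nonneg (x - 1/2), pow_nonneg h0 3, pow_nonneg h0 4,
      pow_nonneg h0 5, pow_nonneg h0 6, pow_nonneg h0 7, pow_nonneg h0 8, pow_nonneg h0 9,
      mul_nonneg (mul_nonneg h0 h0) h0, sq_nonneg (x*x - x), sq_nonneg (x*x*x)]
  linarith

lemma core_bound (k t s : ℕ) (a b : ℝ) (hk : 3 ≤ k) (ht : 1 ≤ t) (hs : 1 ≤ s)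
    (hts : t + s = k) (ha : 0 < a) (hb : 0 < b) (hba : a ≤ b)
    (hp1 : b ≤ Real.exp 1 * k * a)
    (hp2 : Real.exp 1 * k * a ≤ (1 + Real.exp 1/(100*k)) * b) :
    ((k:ℝ)*a/((t:ℝ)*b))^t * ((k:ℝ)*(b-a)/((s:ℝ)*b))^s ≤ Real.exp (-(1/Real.exp 1)) := by
  have he1 : 2.7182 ≤ Real.exp 1 := by
    have := Real.exp_one_gt_d9; norm_num at this ⊢; linarith
  have he2 : Real.exp 1 ≤ 2.7183 := by
    have := Real.exp_one_lt_d9; norm_num at this ⊢; linarith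
  have he0 : (0:ℝ) < Real.exp 1 := Real.exp_pos 1
  have hk0 : (0:ℝ) < k := by positivity
  have hkR : (3:ℝ) ≤ (k:ℝ) := by exact_mod_cast hk
  have hk0' : (0:ℝ) < (k:ℝ) := by linarith
  have ht0 : (0:ℝ) < (t:ℝ) := by exact_mod_cast ht
  have hs0 : (0:ℝ) < (s:ℝ) := by exact_mod_cast hs
  have hba0 : (0:ℝ) ≤ b - a := by linarith
  have hA0 : (0:ℝ) ≤ (k:ℝ)*a/((t:ℝ)*b) := by positivity
  have hB0 : (0:ℝ) ≤ (k:ℝ)*(b-a)/((s:ℝ)*b) := by positivity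
  have hpk : (k:ℝ)*a/b ≤ (1 + Real.exp 1/(100*k)) / Real.exp 1 := by
    rw [div_le_div_iff₀ hb he0]
    calc (k:ℝ)*a*Real.exp 1 = Real.exp 1 * k * a := by ring
      _ ≤ (1 + Real.exp 1/(100*k)) * b := hp2
  by_cases ht1 : t = 1
  · -- t = 1 case
    subst ht1
    have hsk : (s:ℝ) = (k:ℝ) - 1 := by
      have : 1 + s = k := hts
      have : ((1 + s : ℕ) : ℝ) = (k:ℝ) := by exact_mod_cast congrArg (Nat.cast (R := ℝ)) this
      push_cast at this
      linarith
    have hs2 : (2:ℝ) ≤ (s:ℝ) := by rw [hsk]; linarith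
    -- bound on A = k*a/b
    have hA : (k:ℝ)*a/(((1:ℕ):ℝ)*b) ≤ Real.exp (Real.exp 1/(100*k) - 1) := by
      have h1 : (k:ℝ)*a/(((1:ℕ):ℝ)*b) = (k:ℝ)*a/b := by norm_num
      rw [h1]
      have h2 : (1 + Real.exp 1/(100*k)) ≤ Real.exp (Real.exp 1/(100*k)) := by
        have := Real.add_one_le_exp (Real.exp 1/(100*k))
        linarith
      calc (k:ℝ)*a/b ≤ (1 + Real.exp 1/(100*k)) / Real.exp 1 := hpk
        _ ≤ Real.exp (Real.exp 1/(100*k)) / Real.exp 1 := by gcongr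
        _ = Real.exp (Real.exp 1/(100*k) - 1) := by
            rw [Real.exp_sub]
    -- bound on B
    have hab1 : 1 - a/b ≤ Real.exp (-(1/(Real.exp 1 * k))) := by
      have hpa : 1/(Real.exp 1 * k) ≤ a/b := by
        rw [div_le_div_iff₀ (by positivity) hb]
        calc 1 * b = b := by ring
          _ ≤ Real.exp 1 * k * a := hp1
          _ = a * (Real.exp 1 * k) := by ring
      calc 1 - a/b ≤ 1 - 1/(Real.exp 1 * k) := by linarith
        _ ≤ Real.exp (-(1/(Real.exp 1 * k))) := by
            have := Real.add_one_le_exp (-(1/(Real.exp 1 * k)))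
            linarith
    have hBval : (k:ℝ)*(b-a)/((s:ℝ)*b) = (1 + 1/(s:ℝ)) * (1 - a/b) := by
      have h1 : (1:ℝ) - a/b = (b-a)/b := by field_simp
      have h2 : (1:ℝ) + 1/(s:ℝ) = ((s:ℝ)+1)/s := by field_simp
      have h3 : (s:ℝ) + 1 = (k:ℝ) := by linarith [hsk]
      rw [h1, h2, div_mul_div_comm, h3]
    have hx := cubic_taylor' (1/(s:ℝ)) (by positivity)
    have hB : (k:ℝ)*(b-a)/((s:ℝ)*b)
        ≤ Real.exp (1/(s:ℝ) - (1/(s:ℝ))^2/2 + (1/(s:ℝ))^3/3 - 1/(Real.exp 1 * k)) := by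
      rw [hBval]
      have e1 : Real.exp (1/(s:ℝ) - (1/(s:ℝ))^2/2 + (1/(s:ℝ))^3/3 - 1/(Real.exp 1 * k))
          = Real.exp (1/(s:ℝ) - (1/(s:ℝ))^2/2 + (1/(s:ℝ))^3/3)
            * Real.exp (-(1/(Real.exp 1 * k))) := by
        rw [← Real.exp_add]; ring_nf
      rw [e1]
      apply mul_le_mul hx hab1 (by rw [sub_nonneg]; exact div_le_one_of_le₀ hba hb.le) (le_of_lt (Real.exp_pos _))
    -- combine
    have hApow : ((k:ℝ)*a/(((1:ℕ):ℝ)*b))^(1:ℕ) = (k:ℝ)*a/(((1:ℕ):ℝ)*b) := pow_one _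
    have hBpow : ((k:ℝ)*(b-a)/((s:ℝ)*b))^s
        ≤ Real.exp ((s:ℝ) * (1/(s:ℝ) - (1/(s:ℝ))^2/2 + (1/(s:ℝ))^3/3 - 1/(Real.exp 1 * k))) := by
      rw [Real.exp_nat_mul]
      exact pow_le_pow_left₀ hB0 hB s
    calc ((k:ℝ)*a/(((1:ℕ):ℝ)*b))^(1:ℕ) * ((k:ℝ)*(b-a)/((s:ℝ)*b))^s
        ≤ Real.exp (Real.exp 1/(100*k) - 1)
          * Real.exp ((s:ℝ) * (1/(s:ℝ) - (1/(s:ℝ))^2/2 + (1/(s:ℝ))^3/3 - 1/(Real.exp 1 * k))) := by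
          rw [hApow]
          exact mul_le_mul hA hBpow (by positivity) (le_of_lt (Real.exp_pos _))
      _ = Real.exp (Real.exp 1/(100*k) - 1
          + (s:ℝ) * (1/(s:ℝ) - (1/(s:ℝ))^2/2 + (1/(s:ℝ))^3/3 - 1/(Real.exp 1 * k))) := by
          rw [← Real.exp_add]
      _ ≤ Real.exp (-(1/Real.exp 1)) := by
          apply Real.exp_le_exp.mpr
          have hexpand : (s:ℝ) * (1/(s:ℝ) - (1/(s:ℝ))^2/2 + (1/(s:ℝ))^3/3 - 1/(Real.exp 1 * k))
              = 1 - 1/(2*(s:ℝ)) + 1/(3*(s:ℝ)^2) - (s:ℝ)/(Real.exp 1 * k) := by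
            field_simp
          rw [hexpand]
          have hsc := scalar_ineq (k:ℝ) (Real.exp 1) hkR he1 he2
          rw [← hsk] at hsc
          have hmix : 1/Real.exp 1 - (s:ℝ)/(Real.exp 1 * k) = 1/(Real.exp 1 * k) := by
            rw [hsk]
            field_simp
            ring
          linarith [hmix, hsc]
  · -- t ≥ 2 case
    have ht2 : 2 ≤ t := by omega
    have ht2R : (2:ℝ) ≤ (t:ℝ) := by exact_mod_cast ht2
    have hnum : (k:ℝ)*a/b ≤ 1.01/Real.exp 1 := by
      have h100 : Real.exp 1/(100*(k:ℝ)) ≤ 0.01 := by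
        calc Real.exp 1/(100*(k:ℝ)) ≤ 2.7183/(100*(k:ℝ)) := by gcongr
          _ ≤ 2.7183/300 := by
              apply div_le_div_of_nonneg_left (by norm_num) (by norm_num) (by linarith)
          _ ≤ 0.01 := by norm_num
      calc (k:ℝ)*a/b ≤ (1 + Real.exp 1/(100*k)) / Real.exp 1 := hpk
        _ ≤ 1.01/Real.exp 1 := by gcongr; linarith
    have hA1 : (k:ℝ)*a/((t:ℝ)*b) ≤ 1.01/(Real.exp 1 * t) := by
      have hd : (k:ℝ)*a/((t:ℝ)*b) = ((k:ℝ)*a/b)/t := by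
        rw [div_div, mul_comm b (t:ℝ)]
      rw [hd]
      calc ((k:ℝ)*a/b)/t ≤ (1.01/Real.exp 1)/t := by gcongr
        _ = 1.01/(Real.exp 1 * t) := by rw [div_div]
    have hApow : ((k:ℝ)*a/((t:ℝ)*b))^t ≤ (1.01/(Real.exp 1 * t))^t :=
      pow_le_pow_left₀ hA0 hA1 t
    have hB1 : (k:ℝ)*(b-a)/((s:ℝ)*b) ≤ (k:ℝ)/(s:ℝ) := by
      calc (k:ℝ)*(b-a)/((s:ℝ)*b) ≤ (k:ℝ)*b/((s:ℝ)*b) := by gcongr; linarith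
        _ = (k:ℝ)/(s:ℝ) := mul_div_mul_right _ _ (ne_of_gt hb)
    have hktsR : (k:ℝ) = (t:ℝ) + (s:ℝ) := by exact_mod_cast hts.symm
    have hB2 : (k:ℝ)/(s:ℝ) = 1 + (t:ℝ)/(s:ℝ) := by
      rw [hktsR]; field_simp; ring
    have hB3 : (k:ℝ)/(s:ℝ) ≤ Real.exp ((t:ℝ)/(s:ℝ)) := by
      rw [hB2]
      have := Real.add_one_le_exp ((t:ℝ)/(s:ℝ))
      linarith
    have hBpow : ((k:ℝ)*(b-a)/((s:ℝ)*b))^s ≤ Real.exp t := by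
      calc ((k:ℝ)*(b-a)/((s:ℝ)*b))^s ≤ (Real.exp ((t:ℝ)/(s:ℝ)))^s :=
            pow_le_pow_left₀ hB0 (hB1.trans hB3) s
        _ = Real.exp ((s:ℝ) * ((t:ℝ)/(s:ℝ))) := (Real.exp_nat_mul _ s).symm
        _ = Real.exp t := by
            congr 1
            field_simp
    have hcomb : ((k:ℝ)*a/((t:ℝ)*b))^t * ((k:ℝ)*(b-a)/((s:ℝ)*b))^s
        ≤ (1.01/(Real.exp 1 * t))^t * Real.exp t := by
      apply mul_le_mul hApow hBpow (by positivity) (by positivity)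
    have hsimp : (1.01/(Real.exp 1 * t))^t * Real.exp t = (1.01/(t:ℝ))^t := by
      rw [← Real.exp_one_pow, ← mul_pow]
      congr 1
      field_simp
    have hfin : (1.01/(t:ℝ))^t ≤ (1.01/2)^2 := by
      calc (1.01/(t:ℝ))^t ≤ (1.01/(t:ℝ))^2 := by
            apply pow_le_pow_of_le_one (by positivity) ?_ ht2
            rw [div_le_one (by linarith)]
            linarith
        _ ≤ (1.01/2)^2 := by gcongr
    have hexp : ((1.01:ℝ)/2)^2 ≤ Real.exp (-(1/Real.exp 1)) := by
      have h1 := Real.add_one_le_exp (-(1/Real.exp 1))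
      have h2 : 1/Real.exp 1 ≤ 1/2.7182 := by gcongr
      norm_num at h1 h2 ⊢
      linarith
    calc ((k:ℝ)*a/((t:ℝ)*b))^t * ((k:ℝ)*(b-a)/((s:ℝ)*b))^s
        ≤ (1.01/(Real.exp 1 * t))^t * Real.exp t := hcomb
      _ = (1.01/(t:ℝ))^t := hsimp
      _ ≤ (1.01/2)^2 := hfin
      _ ≤ Real.exp (-(1/Real.exp 1)) := hexp

lemma choose_nat_entropy (M j : ℕ) (hj : j ≤ M) :
    M.choose j * j^j * (M-j)^(M-j) ≤ M^M := by
  have key : j^j * (M-j)^(M-j) * (M.choose j)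
      ≤ ∑ i ∈ range (M+1), j^i * (M-j)^(M-i) * (M.choose i) :=
    Finset.single_le_sum (f := fun i => j^i * (M-j)^(M-i) * (M.choose i))
      (fun i _ => Nat.zero_le _) (mem_range.mpr (by omega))
  calc M.choose j * j^j * (M-j)^(M-j)
      = j^j * (M-j)^(M-j) * (M.choose j) := by ring
    _ ≤ ∑ i ∈ range (M+1), j^i * (M-j)^(M-i) * (M.choose i) := key
    _ = (j + (M-j))^M := (add_pow j (M-j) M).symm
    _ = M^M := by congr 1; omega

lemma term_bound (k n t a b : ℕ) (hk : 3 ≤ k) (hn : 1 ≤ n) (ht : t ≤ k)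
    (ha : 1 ≤ a) (hab : a ≤ b)
    (hp1 : (b:ℝ) ≤ Real.exp 1 * k * a)
    (hp2 : Real.exp 1 * k * (a:ℝ) ≤ (1 + Real.exp 1/(100*k)) * b) :
    ((k*n).choose (t*n) : ℝ) * (a:ℝ)^(t*n) * ((b:ℝ)-(a:ℝ))^(k*n-t*n)
      ≤ Real.exp (-((n:ℝ)/Real.exp 1)) * (b:ℝ)^(k*n) := by
  have he1 : 2.7182 ≤ Real.exp 1 := by
    have := Real.exp_one_gt_d9; norm_num at this ⊢; linarith
  have he2 : Real.exp 1 ≤ 2.7183 := by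
    have := Real.exp_one_lt_d9; norm_num at this ⊢; linarith
  have he0 : (0:ℝ) < Real.exp 1 := Real.exp_pos 1
  have hkR : (3:ℝ) ≤ (k:ℝ) := by exact_mod_cast hk
  have hk0 : (0:ℝ) < (k:ℝ) := by linarith
  have hn0 : (0:ℝ) < (n:ℝ) := by exact_mod_cast hn
  have haR : (0:ℝ) < (a:ℝ) := by exact_mod_cast ha
  have hbR : (0:ℝ) < (b:ℝ) := lt_of_lt_of_le haR (by exact_mod_cast hab)
  have habR : (a:ℝ) ≤ (b:ℝ) := by exact_mod_cast hab
  have hbaR : (0:ℝ) ≤ (b:ℝ) - a := by linarith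
  have hfrac : 1/(Real.exp 1 * k) ≤ (a:ℝ)/b := by
    rw [div_le_div_iff₀ (by positivity) hbR]
    calc 1 * (b:ℝ) = b := by ring
      _ ≤ Real.exp 1 * k * a := hp1
      _ = a * (Real.exp 1 * k) := by ring
  have hab1 : 1 - (a:ℝ)/b ≤ Real.exp (-(1/(Real.exp 1 * k))) := by
    have := Real.add_one_le_exp (-(1/(Real.exp 1 * k)))
    linarith
  by_cases ht0 : t = 0
  · -- t = 0
    subst ht0
    simp only [Nat.zero_mul, Nat.choose_zero_right, pow_zero, Nat.sub_zero, Nat.cast_one,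
      one_mul, mul_one]
    have hstep : (b:ℝ) - a ≤ Real.exp (-(1/(Real.exp 1 * k))) * b := by
      have h1 : (b:ℝ) - a = (1 - (a:ℝ)/b) * b := by field_simp
      rw [h1]
      exact mul_le_mul_of_nonneg_right hab1 hbR.le
    calc ((b:ℝ) - a)^(k*n) ≤ (Real.exp (-(1/(Real.exp 1 * k))) * b)^(k*n) :=
          pow_le_pow_left₀ hbaR hstep _
      _ = Real.exp (-(1/(Real.exp 1 * k)))^(k*n) * (b:ℝ)^(k*n) := mul_pow _ _ _
      _ = Real.exp (-((n:ℝ)/Real.exp 1)) * (b:ℝ)^(k*n) := by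
          rw [← Real.exp_nat_mul]
          congr 1
          push_cast
          field_simp
  · by_cases htk : t = k
    · -- t = k
      rw [show t*n = k*n from by rw [htk]]
      simp only [Nat.choose_self, Nat.sub_self, pow_zero, Nat.cast_one, one_mul, mul_one]
      have hek : (8.15:ℝ) ≤ Real.exp 1 * k := by nlinarith
      have h101 : Real.exp 1 * k * (a:ℝ) ≤ 1.01 * b := by
        have h100 : Real.exp 1/(100*(k:ℝ)) ≤ 0.01 := by
          calc Real.exp 1/(100*(k:ℝ)) ≤ 2.7183/(100*(k:ℝ)) := by gcongr
            _ ≤ 2.7183/300 := by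
                apply div_le_div_of_nonneg_left (by norm_num) (by norm_num) (by linarith)
            _ ≤ 0.01 := by norm_num
        calc Real.exp 1 * k * (a:ℝ) ≤ (1 + Real.exp 1/(100*k)) * b := hp2
          _ ≤ 1.01 * b := by nlinarith
      have hak : (a:ℝ) ≤ b/6 := by nlinarith
      have h16 : ((1:ℝ)/6)^(k*n) ≤ Real.exp (-((n:ℝ)/Real.exp 1)) := by
        have hr : Real.exp (-((n:ℝ)/Real.exp 1)) = Real.exp (-(1/Real.exp 1))^n := by
          rw [← Real.exp_nat_mul]
          congr 1
          ring
        rw [hr]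
        calc ((1:ℝ)/6)^(k*n) ≤ ((1:ℝ)/6)^n := by
              apply pow_le_pow_of_le_one (by norm_num) (by norm_num)
              calc n = 1*n := (one_mul n).symm
                _ ≤ k*n := Nat.mul_le_mul_right n (by omega)
          _ ≤ Real.exp (-(1/Real.exp 1))^n := by
              apply pow_le_pow_left₀ (by norm_num)
              have h1 := Real.add_one_le_exp (-(1/Real.exp 1))
              have h2 : 1/Real.exp 1 ≤ 1/2.7182 := by gcongr
              norm_num at h1 h2 ⊢
              linarith
      calc (a:ℝ)^(k*n) ≤ ((b:ℝ)/6)^(k*n) := pow_le_pow_left₀ haR.le hak _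
        _ = (b:ℝ)^(k*n) * ((1:ℝ)/6)^(k*n) := by
            rw [div_eq_mul_one_div, mul_pow]
        _ ≤ (b:ℝ)^(k*n) * Real.exp (-((n:ℝ)/Real.exp 1)) := by
            exact mul_le_mul_of_nonneg_left h16 (by positivity)
        _ = Real.exp (-((n:ℝ)/Real.exp 1)) * (b:ℝ)^(k*n) := mul_comm _ _
    · -- 1 ≤ t ≤ k-1
      set s := k - t with hs
      have ht1 : 1 ≤ t := by omega
      have hs1 : 1 ≤ s := by omega
      have hts : t + s = k := by omega
      have hm2eq : k*n - t*n = s*n := by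
        rw [hs, Nat.sub_mul]
      have ht0R : (0:ℝ) < (t:ℝ) := by exact_mod_cast ht1
      have hs0R : (0:ℝ) < (s:ℝ) := by exact_mod_cast hs1
      have htnR : (0:ℝ) < ((t*n:ℕ):ℝ) := by positivity
      have hsnR : (0:ℝ) < ((s*n:ℕ):ℝ) := by
        have : 1 ≤ s*n := Nat.one_le_iff_ne_zero.mpr (by positivity)
        exact_mod_cast this
      rw [hm2eq]
      have hent : ((k*n).choose (t*n) : ℝ) * ((t*n:ℕ):ℝ)^(t*n) * ((s*n:ℕ):ℝ)^(s*n)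
          ≤ ((k*n:ℕ):ℝ)^(k*n) := by
        have h := choose_nat_entropy (k*n) (t*n) (Nat.mul_le_mul_right n ht)
        rw [hm2eq] at h
        exact_mod_cast h
      set A := (k:ℝ)*a/((t:ℝ)*b) with hA
      set B := (k:ℝ)*((b:ℝ)-a)/((s:ℝ)*b) with hB
      have hA0 : 0 ≤ A := by rw [hA]; positivity
      have hB0 : 0 ≤ B := by rw [hB]; positivity
      have hAeq : A * (((t*n:ℕ):ℝ)*b) = ((k*n:ℕ):ℝ)*a := by
        rw [hA]
        push_cast
        field_simp
      have hBeq : B * (((s*n:ℕ):ℝ)*b) = ((k*n:ℕ):ℝ)*((b:ℝ)-a) := by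
        rw [hB]
        have hkts : (k:ℝ) = (t:ℝ) + s := by exact_mod_cast hts.symm
        push_cast
        field_simp
      have e1 : A^(t*n) * (((t*n:ℕ):ℝ)^(t*n) * (b:ℝ)^(t*n)) = (((k*n:ℕ):ℝ)*a)^(t*n) := by
        rw [← mul_pow, ← mul_pow, hAeq]
      have e2 : B^(s*n) * (((s*n:ℕ):ℝ)^(s*n) * (b:ℝ)^(s*n)) = (((k*n:ℕ):ℝ)*((b:ℝ)-a))^(s*n) := by
        rw [← mul_pow, ← mul_pow, hBeq]
      have hsum : t*n + s*n = k*n := by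
        rw [← Nat.add_mul, hts]
      have key : ((k*n).choose (t*n) : ℝ) * (a:ℝ)^(t*n) * ((b:ℝ)-a)^(s*n)
          ≤ (A^t * B^s)^n * (b:ℝ)^(k*n) := by
        have hpos : (0:ℝ) < ((t*n:ℕ):ℝ)^(t*n) * ((s*n:ℕ):ℝ)^(s*n) := by positivity
        rw [← mul_le_mul_iff_of_pos_right hpos]
        have expand : (A^t * B^s)^n = A^(t*n) * B^(s*n) := by
          rw [mul_pow, ← pow_mul, ← pow_mul]
        calc ((k*n).choose (t*n) : ℝ) * (a:ℝ)^(t*n) * ((b:ℝ)-a)^(s*n)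
              * (((t*n:ℕ):ℝ)^(t*n) * ((s*n:ℕ):ℝ)^(s*n))
            = (((k*n).choose (t*n) : ℝ) * ((t*n:ℕ):ℝ)^(t*n) * ((s*n:ℕ):ℝ)^(s*n))
              * ((a:ℝ)^(t*n) * ((b:ℝ)-a)^(s*n)) := by ring
          _ ≤ ((k*n:ℕ):ℝ)^(k*n) * ((a:ℝ)^(t*n) * ((b:ℝ)-a)^(s*n)) := by
              apply mul_le_mul_of_nonneg_right hent (by positivity)
          _ = (((k*n:ℕ):ℝ)*a)^(t*n) * (((k*n:ℕ):ℝ)*((b:ℝ)-a))^(s*n) := by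
              rw [mul_pow, mul_pow, ← hsum, pow_add]
              ring
          _ = (A^(t*n) * (((t*n:ℕ):ℝ)^(t*n) * (b:ℝ)^(t*n)))
              * (B^(s*n) * (((s*n:ℕ):ℝ)^(s*n) * (b:ℝ)^(s*n))) := by rw [e1, e2]
          _ = (A^t * B^s)^n * (b:ℝ)^(k*n)
              * (((t*n:ℕ):ℝ)^(t*n) * ((s*n:ℕ):ℝ)^(s*n)) := by
              rw [expand, ← hsum, pow_add]
              ring
      have hcore := core_bound k t s (a:ℝ) (b:ℝ) hk ht1 hs1 hts haR hbR habR hp1 hp2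
      calc ((k*n).choose (t*n) : ℝ) * (a:ℝ)^(t*n) * ((b:ℝ)-a)^(s*n)
          ≤ (A^t * B^s)^n * (b:ℝ)^(k*n) := key
        _ ≤ Real.exp (-(1/Real.exp 1))^n * (b:ℝ)^(k*n) := by
            apply mul_le_mul_of_nonneg_right _ (by positivity)
            exact pow_le_pow_left₀ (by positivity) hcore n
        _ = Real.exp (-((n:ℝ)/Real.exp 1)) * (b:ℝ)^(k*n) := by
            rw [← Real.exp_nat_mul]
            congr 1
            ring

lemma W_bound (k n a b : ℕ) (hk : 3 ≤ k) (hn : 1 ≤ n)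
    (ha : 1 ≤ a) (hab : a ≤ b)
    (hp1 : (b:ℝ) ≤ Real.exp 1 * k * a)
    (hp2 : Real.exp 1 * k * (a:ℝ) ≤ (1 + Real.exp 1/(100*k)) * b) :
    ((∑ t ∈ range (k+1), (k*n).choose (t*n) * a^(t*n) * (b-a)^(k*n - t*n) : ℕ) : ℝ)
      ≤ ((k:ℝ)+1) * Real.exp (-((n:ℝ)/Real.exp 1)) * (b:ℝ)^(k*n) := by
  push_cast [Nat.cast_sub hab]
  calc ∑ t ∈ range (k+1), ((k*n).choose (t*n) : ℝ) * (a:ℝ)^(t*n) * ((b:ℝ)-a)^(k*n - t*n)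
      ≤ ∑ t ∈ range (k+1), Real.exp (-((n:ℝ)/Real.exp 1)) * (b:ℝ)^(k*n) := by
        apply Finset.sum_le_sum
        intro t htmem
        rw [mem_range] at htmem
        exact term_bound k n t a b hk hn (by omega) ha hab hp1 hp2
    _ = ((k:ℝ)+1) * Real.exp (-((n:ℝ)/Real.exp 1)) * (b:ℝ)^(k*n) := by
        rw [sum_const, card_range, nsmul_eq_mul]
        push_cast
        ring

lemma pow_le_exp_mul_factorial (M : ℕ) :
    (M:ℝ)^M ≤ Real.exp M * M.factorial := by
  have h1 := Real.sum_le_exp_of_nonneg (x := (M:ℝ)) (by positivity) (M+1)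
  have h2 : (M:ℝ)^M / M.factorial ≤ ∑ i ∈ range (M+1), (M:ℝ)^i / i.factorial :=
    Finset.single_le_sum (f := fun i => (M:ℝ)^i / i.factorial)
      (fun i _ => by positivity) (self_mem_range_succ M)
  have hf : (0:ℝ) < M.factorial := by positivity
  rw [div_le_iff₀ hf] at h2
  calc (M:ℝ)^M ≤ (∑ i ∈ range (M+1), (M:ℝ)^i / i.factorial) * M.factorial := h2
    _ ≤ Real.exp M * M.factorial := mul_le_mul_of_nonneg_right h1 hf.le

lemma choose_le_exp_pow (K M : ℕ) (hM : 1 ≤ M) :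
    (K.choose M : ℝ) ≤ (Real.exp 1 * K / M)^M := by
  have h1 : (K.choose M : ℝ) ≤ (K:ℝ)^M / M.factorial := Nat.choose_le_pow_div M K
  have hMpos : (0:ℝ) < M := by exact_mod_cast hM
  have hf : (0:ℝ) < M.factorial := by positivity
  have key := pow_le_exp_mul_factorial M
  have hKp : (0:ℝ) ≤ (K:ℝ)^M := by positivity
  calc (K.choose M : ℝ) ≤ (K:ℝ)^M / M.factorial := h1
    _ ≤ (Real.exp 1 * K / M)^M := by
        rw [div_pow, mul_pow, Real.exp_one_pow]
        rw [div_le_div_iff₀ hf (by positivity)]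
        calc (K:ℝ)^M * (M:ℝ)^M ≤ (K:ℝ)^M * (Real.exp M * M.factorial) :=
              mul_le_mul_of_nonneg_left key hKp
          _ = Real.exp M * (K:ℝ)^M * M.factorial := by ring

lemma count_ineq (k n r K a b : ℕ) (hk : 3 ≤ k) (hn : 1 ≤ n) (hr : 1 ≤ r)
    (ha : 1 ≤ a) (hab : a ≤ b)
    (hp1 : (b:ℝ) ≤ Real.exp 1 * k * a)
    (hp2 : Real.exp 1 * k * (a:ℝ) ≤ (1 + Real.exp 1/(100*k)) * b)
    (hK : (K:ℝ) ≤ ((k:ℝ)*(n:ℝ)/4) * (1 + 1/(Real.exp 1*k) - 2/n)^r)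
    (hd : 0 ≤ 1 + 1/(Real.exp 1*(k:ℝ)) - 2/(n:ℝ)) :
    K.choose (k*n) * (∑ t ∈ range (k+1),
        (k*n).choose (t*n) * a^(t*n) * (b-a)^(k*n - t*n)) ^ r
      < b ^ (k*n*r) := by
  have he1 : 2.7182 ≤ Real.exp 1 := by
    have := Real.exp_one_gt_d9; norm_num at this ⊢; linarith
  have he2 : Real.exp 1 ≤ 2.7183 := by
    have := Real.exp_one_lt_d9; norm_num at this ⊢; linarith
  have he0 : (0:ℝ) < Real.exp 1 := Real.exp_pos 1
  have hkR : (3:ℝ) ≤ (k:ℝ) := by exact_mod_cast hk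
  have hk0 : (0:ℝ) < (k:ℝ) := by linarith
  have hn0 : (0:ℝ) < (n:ℝ) := by exact_mod_cast hn
  have hbR : (0:ℝ) < (b:ℝ) := by
    have : (1:ℕ) ≤ b := le_trans ha hab
    exact_mod_cast this
  have hM1 : 1 ≤ k*n := Nat.one_le_iff_ne_zero.mpr (Nat.mul_ne_zero (by omega) (by omega))
  have hMR : (0:ℝ) < ((k*n:ℕ):ℝ) := by exact_mod_cast hM1
  set d := 1 + 1/(Real.exp 1*(k:ℝ)) - 2/(n:ℝ) with hdd
  set W := ∑ t ∈ range (k+1), (k*n).choose (t*n) * a^(t*n) * (b-a)^(k*n - t*n) with hW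
  set E := Real.exp (-((n:ℝ)/Real.exp 1)) with hE
  have c1 : ((K.choose (k*n)) : ℝ) ≤ (Real.exp 1 * K / (k*n:ℕ))^(k*n) :=
    choose_le_exp_pow K (k*n) hM1
  have c2 : Real.exp 1 * K / ((k*n:ℕ):ℝ) ≤ (Real.exp 1/4) * d^r := by
    rw [div_le_iff₀ hMR]
    have hpow : (0:ℝ) ≤ d^r := pow_nonneg hd r
    calc Real.exp 1 * (K:ℝ) ≤ Real.exp 1 * (((k:ℝ)*(n:ℝ)/4) * d^r) := by
          apply mul_le_mul_of_nonneg_left hK he0.le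
      _ = (Real.exp 1/4) * d^r * ((k*n:ℕ):ℝ) := by
          push_cast
          ring
  have c3 : ((K.choose (k*n)) : ℝ) ≤ ((Real.exp 1/4) * d^r)^(k*n) := by
    refine c1.trans (pow_le_pow_left₀ ?_ c2 _)
    positivity
  have c4 : (W:ℝ) ≤ ((k:ℝ)+1) * E * (b:ℝ)^(k*n) :=
    W_bound k n a b hk hn ha hab hp1 hp2
  have hWpos : (0:ℝ) ≤ (W:ℝ) := by positivity
  have hbr : d^(k*n) * (((k:ℝ)+1) * E) ≤ 1 := by
    have hde : d ≤ Real.exp (1/(Real.exp 1*(k:ℝ)) - 2/(n:ℝ)) := by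
      have := Real.add_one_le_exp (1/(Real.exp 1*(k:ℝ)) - 2/(n:ℝ))
      rw [hdd]
      linarith
    have hdpow : d^(k*n) ≤ Real.exp (((k*n:ℕ):ℝ) * (1/(Real.exp 1*(k:ℝ)) - 2/(n:ℝ))) := by
      rw [Real.exp_nat_mul]
      exact pow_le_pow_left₀ hd hde _
    have hident : ((k*n:ℕ):ℝ) * (1/(Real.exp 1*(k:ℝ)) - 2/(n:ℝ))
        = (n:ℝ)/Real.exp 1 - 2*k := by
      push_cast
      field_simp
    have hk1exp : ((k:ℝ)+1) ≤ Real.exp (2*(k:ℝ)) := by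
      have := Real.add_one_le_exp (2*(k:ℝ))
      linarith
    calc d^(k*n) * (((k:ℝ)+1) * E)
        ≤ Real.exp ((n:ℝ)/Real.exp 1 - 2*k) * (Real.exp (2*(k:ℝ)) * E) := by
          apply mul_le_mul (by rw [← hident]; exact hdpow)
            (mul_le_mul_of_nonneg_right hk1exp (Real.exp_pos _).le)
            (by positivity) (Real.exp_pos _).le
      _ = 1 := by
          rw [hE, ← Real.exp_add, ← Real.exp_add]
          rw [show (n:ℝ)/Real.exp 1 - 2*k + (2*(k:ℝ) + -((n:ℝ)/Real.exp 1)) = 0 by ring]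
          exact Real.exp_zero
  -- assemble
  rw [← Nat.cast_lt (α := ℝ), Nat.cast_mul, Nat.cast_pow, Nat.cast_pow]
  have hZ : (0:ℝ) < ((b:ℝ)^(k*n))^r := by positivity
  calc ((K.choose (k*n)) : ℝ) * (W:ℝ)^r
      ≤ ((Real.exp 1/4) * d^r)^(k*n) * (((k:ℝ)+1) * E * (b:ℝ)^(k*n))^r :=
        mul_le_mul c3 (pow_le_pow_left₀ hWpos c4 r) (pow_nonneg hWpos r) (by positivity)
    _ = (Real.exp 1/4)^(k*n) * ((d^(k*n) * (((k:ℝ)+1) * E))^r * ((b:ℝ)^(k*n))^r) := by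
        rw [mul_pow (Real.exp 1/4) (d^r) (k*n), mul_pow (((k:ℝ)+1)*E) ((b:ℝ)^(k*n)) r,
          ← pow_mul d r (k*n), Nat.mul_comm r (k*n), pow_mul d (k*n) r,
          mul_pow (d^(k*n)) (((k:ℝ)+1)*E) r]
        ring
    _ ≤ (Real.exp 1/4)^(k*n) * (1^r * ((b:ℝ)^(k*n))^r) := by
        apply mul_le_mul_of_nonneg_left _ (by positivity)
        apply mul_le_mul_of_nonneg_right _ (by positivity)
        exact pow_le_pow_left₀ (by positivity) hbr r
    _ = (Real.exp 1/4)^(k*n) * ((b:ℝ)^(k*n))^r := by rw [one_pow, one_mul]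
    _ ≤ (Real.exp 1/4) * ((b:ℝ)^(k*n))^r := by
        apply mul_le_mul_of_nonneg_right (pow_le_of_le_one (by positivity)
          (by linarith) (Nat.one_le_iff_ne_zero.mp hM1)) hZ.le
    _ < 1 * ((b:ℝ)^(k*n))^r := by
        apply mul_lt_mul_of_pos_right (by linarith) hZ
    _ = ((b:ℝ)^(k*n))^r := one_mul _
    _ = (b:ℝ)^(k*n*r) := by rw [← pow_mul]

lemma ab_props (k : ℕ) (hk : 3 ≤ k) :
    (1 ≤ ⌈(100*(k:ℝ))/Real.exp 1⌉₊) ∧ (⌈(100*(k:ℝ))/Real.exp 1⌉₊ ≤ 100*k^2) ∧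
    ((100*k^2 : ℕ):ℝ) ≤ Real.exp 1 * k * (⌈(100*(k:ℝ))/Real.exp 1⌉₊ : ℝ) ∧
    Real.exp 1 * k * ((⌈(100*(k:ℝ))/Real.exp 1⌉₊ : ℕ):ℝ)
      ≤ (1 + Real.exp 1/(100*k)) * ((100*k^2 : ℕ):ℝ) := by
  have he1 : 2.7182 ≤ Real.exp 1 := by
    have := Real.exp_one_gt_d9; norm_num at this ⊢; linarith
  have he2 : Real.exp 1 ≤ 2.7183 := by
    have := Real.exp_one_lt_d9; norm_num at this ⊢; linarith
  have he0 : (0:ℝ) < Real.exp 1 := Real.exp_pos 1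
  have hkR : (3:ℝ) ≤ (k:ℝ) := by exact_mod_cast hk
  have hk0 : (0:ℝ) < (k:ℝ) := by linarith
  have hxpos : (0:ℝ) < (100*(k:ℝ))/Real.exp 1 := by positivity
  have hlow : (100*(k:ℝ))/Real.exp 1 ≤ (⌈(100*(k:ℝ))/Real.exp 1⌉₊ : ℝ) := Nat.le_ceil _
  have hhi : ((⌈(100*(k:ℝ))/Real.exp 1⌉₊ : ℕ):ℝ) < (100*(k:ℝ))/Real.exp 1 + 1 :=
    Nat.ceil_lt_add_one hxpos.le
  have hbcast : ((100*k^2 : ℕ):ℝ) = 100*(k:ℝ)^2 := by push_cast; ring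
  refine ⟨Nat.one_le_iff_ne_zero.mpr (by positivity), ?_, ?_, ?_⟩
  · rw [← Nat.cast_le (α := ℝ), hbcast]
    have hdiv : (100*(k:ℝ))/Real.exp 1 ≤ 100*(k:ℝ)/2 := by
      apply div_le_div_of_nonneg_left (by linarith) (by norm_num) (by linarith)
    nlinarith
  · rw [hbcast]
    have : Real.exp 1 * k * ((100*(k:ℝ))/Real.exp 1)
        ≤ Real.exp 1 * k * (⌈(100*(k:ℝ))/Real.exp 1⌉₊ : ℝ) := by
      apply mul_le_mul_of_nonneg_left hlow (by positivity)
    have heq : Real.exp 1 * k * ((100*(k:ℝ))/Real.exp 1) = 100*(k:ℝ)^2 := by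
      field_simp
    linarith
  · rw [hbcast]
    have h1 : Real.exp 1 * k * ((⌈(100*(k:ℝ))/Real.exp 1⌉₊ : ℕ):ℝ)
        ≤ Real.exp 1 * k * ((100*(k:ℝ))/Real.exp 1 + 1) := by
      apply mul_le_mul_of_nonneg_left hhi.le (by positivity)
    have h2 : Real.exp 1 * k * ((100*(k:ℝ))/Real.exp 1 + 1)
        = (1 + Real.exp 1/(100*k)) * (100*(k:ℝ)^2) := by
      field_simp
    linarith

theorem egz_lower_bound_general :
    ∃ C : ℝ, C > 0 ∧ ∀ k n r : ℕ, 3 ≤ k → 1 ≤ n → 1 ≤ r →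
      ∃ X : Fin (⌊(k * n / 4 : ℝ) *
            (max (1 + 1 / (Real.exp 1 * k) - C / n) 0) ^ r⌋₊) →
          (Fin r → ZMod n),
        ∀ S : Finset (Fin (⌊(k * n / 4 : ℝ) *
            (max (1 + 1 / (Real.exp 1 * k) - C / n) 0) ^ r⌋₊)),
          S.card = k * n → ∑ j ∈ S, X j ≠ 0 := by
  refine ⟨2, by norm_num, ?_⟩
  intro k n r hk hn hr
  set K := ⌊(k * n / 4 : ℝ) *
      (max (1 + 1 / (Real.exp 1 * k) - (2:ℝ) / n) 0) ^ r⌋₊ with hKdef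
  have hM1 : 1 ≤ k*n := Nat.one_le_iff_ne_zero.mpr (Nat.mul_ne_zero (by omega) (by omega))
  by_cases hcase : K < k*n
  · refine ⟨fun _ _ => 0, ?_⟩
    intro S hS
    exfalso
    have h1 : S.card ≤ K := by
      have := Finset.card_le_univ S
      simpa using this
    omega
  · push_neg at hcase
    have hd : 0 ≤ 1 + 1/(Real.exp 1*(k:ℝ)) - 2/(n:ℝ) := by
      by_contra hneg
      push_neg at hneg
      have hmax0 : max (1 + 1 / (Real.exp 1 * (k:ℝ)) - (2:ℝ) / n) 0 = 0 :=
        max_eq_right hneg.le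
      rw [hmax0, zero_pow (by omega), mul_zero, Nat.floor_zero] at hKdef
      omega
    have hmax : max (1 + 1 / (Real.exp 1 * (k:ℝ)) - (2:ℝ) / n) 0
        = 1 + 1 / (Real.exp 1 * (k:ℝ)) - (2:ℝ) / n := max_eq_left hd
    have hKle : (K:ℝ) ≤ ((k:ℝ)*(n:ℝ)/4) * (1 + 1/(Real.exp 1*(k:ℝ)) - 2/(n:ℝ))^r := by
      rw [hKdef]
      have := Nat.floor_le (R := ℝ)
        (show (0:ℝ) ≤ (k * n / 4 : ℝ) *
          (max (1 + 1 / (Real.exp 1 * k) - (2:ℝ) / n) 0) ^ r by positivity)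
      nth_rewrite 2 [hmax] at this
      exact this
    obtain ⟨ha, hab, hp1, hp2⟩ := ab_props k hk
    exact exists_good_seq k n K r (⌈(100*(k:ℝ))/Real.exp 1⌉₊) (100*k^2)
      (by omega) hn hr hab hcase
      (count_ineq k n r K _ _ hk hn hr ha hab hp1 hp2 hKle hd)
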